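/- Let G be an impartial game in which every maximal play sequence (sequence of moves from G to an ended position) has even length. Then G ≈ 0. -/

import Mathlib

universe u

namespace SetTheory

/-- Pre-game (as in the older Mathlib, removed since). -/
inductive PGame : Type (u + 1)
  | mk : ∀ α β : Type u, (α → PGame) → (β → PGame) → PGame

namespace PGame

/-- The pair (`x ≤ y`, `x ⧏ y`), defined as in the older Mathlib. -/
noncomputable def le_lf (x : PGame.{u}) : PGame.{u} → Prop × Prop :=
  PGame.rec (motive := fun _ => PGame.{u} → Prop × Prop)
    (fun xl xr xL xR IHxl IHxr y =>
      PGame.rec (motive := fun _ => Prop × Prop)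
        (fun yl yr yL yR IHyl IHyr =>
          ((∀ i, (IHxl i (mk yl yr yL yR)).2) ∧ ∀ j, (IHyr j).2,
            (∃ i, (IHyl i).1) ∨ ∃ j, (IHxr j (mk yl yr yL yR)).1)) y) x

instance : LE PGame.{u} :=
  ⟨fun x y => (le_lf x y).1⟩

/-- Equivalence of pre-games: `x ≤ y ∧ y ≤ x`. -/
def Equiv (x y : PGame.{u}) : Prop :=
  x ≤ y ∧ y ≤ x

instance : HasEquiv PGame.{u} :=
  ⟨Equiv⟩

instance : Zero PGame.{u} :=
  ⟨⟨PEmpty, PEmpty, PEmpty.elim, PEmpty.elim⟩⟩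

end PGame

end SetTheory

namespace SetTheory.PGame

lemma mk_le_zero' {xl xr : Type u} {xL : xl → PGame.{u}} {xR : xr → PGame.{u}} :
    mk xl xr xL xR ≤ 0 ↔ ∀ i, (le_lf (xL i) 0).2 :=
  ⟨fun h => h.1, fun h => ⟨h, fun j => PEmpty.elim j⟩⟩

lemma mk_lf_zero' {xl xr : Type u} {xL : xl → PGame.{u}} {xR : xr → PGame.{u}} :
    (le_lf (mk xl xr xL xR) 0).2 ↔ ∃ j, xR j ≤ 0 := by
  show (∃ i : PEmpty, _) ∨ _ ↔ _
  constructor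
  · rintro (⟨i, _⟩ | ⟨j, h⟩)
    · exact PEmpty.elim i
    · exact ⟨j, h⟩
  · rintro ⟨j, h⟩
    exact Or.inr ⟨j, h⟩

lemma zero_le_mk' {xl xr : Type u} {xL : xl → PGame.{u}} {xR : xr → PGame.{u}} :
    0 ≤ mk xl xr xL xR ↔ ∀ j, (le_lf 0 (xR j)).2 :=
  ⟨fun h => h.2, fun h => ⟨fun i => PEmpty.elim i, h⟩⟩

lemma zero_lf_mk' {xl xr : Type u} {xL : xl → PGame.{u}} {xR : xr → PGame.{u}} :
    (le_lf 0 (mk xl xr xL xR)).2 ↔ ∃ i, 0 ≤ xL i := by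
  show _ ∨ (∃ j : PEmpty, _) ↔ _
  constructor
  · rintro (⟨i, h⟩ | ⟨j, _⟩)
    · exact ⟨i, h⟩
    · exact PEmpty.elim j
  · rintro ⟨i, h⟩
    exact Or.inl ⟨i, h⟩

end SetTheory.PGame

open SetTheory PGame
open scoped PGame

variable {V : Type} [DecidableEq V]

/-- A (finite) simplicial complex: a downward-closed family of finite sets of vertices. -/
def IsComplex (Δ : Finset (Finset V)) : Prop :=
  ∀ F ∈ Δ, ∀ F' ⊆ F, F' ∈ Δ

/-- `F` is a facet (maximal face) of `Δ`. -/
def IsFacet (Δ : Finset (Finset V)) (F : Finset V) : Prop :=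
  F ∈ Δ ∧ ∀ F' ∈ Δ, F ⊆ F' → F = F'

/-- The link of a vertex `v` in `Δ`: faces `F` with `v ∉ F` and `F ∪ {v} ∈ Δ`. -/
def linkC (Δ : Finset (Finset V)) (v : V) : Finset (Finset V) :=
  Δ.filter fun F => v ∉ F ∧ insert v F ∈ Δ

lemma linkC_isComplex {Δ : Finset (Finset V)} (hΔ : IsComplex Δ) (v : V) :
    IsComplex (linkC Δ v) := by
  intro F hF F' hs
  simp only [linkC, Finset.mem_filter] at hF ⊢
  obtain ⟨hFΔ, hvF, hins⟩ := hF
  exact ⟨hΔ F hFΔ F' hs, fun hv => hvF (hs hv),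
    hΔ _ hins _ (Finset.insert_subset_insert _ hs)⟩

lemma facet_of_facet_link {Δ : Finset (Finset V)} (hΔ : IsComplex Δ) {v : V} {G : Finset V}
    (hG : IsFacet (linkC Δ v) G) : v ∉ G ∧ IsFacet Δ (insert v G) := by
  obtain ⟨hGmem, hGmax⟩ := hG
  simp only [linkC, Finset.mem_filter] at hGmem
  obtain ⟨hGΔ, hvG, hins⟩ := hGmem
  refine ⟨hvG, hins, ?_⟩
  intro F' hF' hsub
  have hvF' : v ∈ F' := hsub (Finset.mem_insert_self _ _)
  have h1 : F'.erase v ∈ linkC Δ v := by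
    simp only [linkC, Finset.mem_filter]
    refine ⟨hΔ F' hF' _ (Finset.erase_subset _ _), Finset.notMem_erase _ _, ?_⟩
    rw [Finset.insert_erase hvF']; exact hF'
  have h2 : G ⊆ F'.erase v :=
    Finset.subset_erase.2 ⟨(Finset.insert_subset_iff.1 hsub).2, hvG⟩
  have h3 := hGmax _ h1 h2
  rw [h3, Finset.insert_erase hvF']

lemma exists_response {Δ : Finset (Finset V)} (hΔ : IsComplex Δ)
    (h : ∀ F : Finset V, IsFacet Δ F → Even F.card) {v : V} (hv : {v} ∈ Δ) :
    ∃ w, {w} ∈ linkC Δ v := by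
  have hne : (Δ.filter fun F => v ∈ F).Nonempty :=
    ⟨{v}, Finset.mem_filter.2 ⟨hv, Finset.mem_singleton_self v⟩⟩
  obtain ⟨F, hF, hFmax⟩ := Finset.exists_max_image _ Finset.card hne
  rw [Finset.mem_filter] at hF
  obtain ⟨hFΔ, hvF⟩ := hF
  have hfacet : IsFacet Δ F := by
    refine ⟨hFΔ, fun F' hF' hsub => ?_⟩
    have : F' ∈ Δ.filter fun F => v ∈ F := Finset.mem_filter.2 ⟨hF', hsub hvF⟩
    exact Finset.eq_of_subset_of_card_le hsub (hFmax _ this)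
  have heven := h F hfacet
  have hcard : 2 ≤ F.card := by
    rw [Nat.even_iff] at heven
    have : 1 ≤ F.card := Finset.card_pos.2 ⟨v, hvF⟩
    omega
  have : 1 ≤ (F.erase v).card := by
    rw [Finset.card_erase_of_mem hvF]; omega
  obtain ⟨w, hw⟩ := Finset.card_pos.1 this
  rw [Finset.mem_erase] at hw
  refine ⟨w, ?_⟩
  simp only [linkC, Finset.mem_filter]
  refine ⟨hΔ F hFΔ _ (Finset.singleton_subset_iff.2 hw.2), ?_, ?_⟩
  · simp only [Finset.mem_singleton]; exact fun e => hw.1 e.symm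
  · exact hΔ F hFΔ _ (by rw [Finset.insert_subset_iff]; exact ⟨hvF, Finset.singleton_subset_iff.2 hw.2⟩)

lemma even_facets_double_link {Δ : Finset (Finset V)} (hΔ : IsComplex Δ)
    (h : ∀ F : Finset V, IsFacet Δ F → Even F.card) {v w : V} :
    ∀ G : Finset V, IsFacet (linkC (linkC Δ v) w) G → Even G.card := by
  intro G hG
  obtain ⟨hwG, hG1⟩ := facet_of_facet_link (linkC_isComplex hΔ v) hG
  obtain ⟨hv2, hG2⟩ := facet_of_facet_link hΔ hG1
  have heven := h _ hG2
  have hvw : v ∉ insert w G := hv2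
  rw [Finset.card_insert_of_notMem hvw, Finset.card_insert_of_notMem hwG] at heven
  rw [Nat.even_iff] at heven ⊢
  omega

theorem linkC_sup_lt (Δ : Finset (Finset V)) (v : V) (hv : {v} ∈ Δ) :
    (linkC Δ v).sup Finset.card < Δ.sup Finset.card := by
  have h1 : (1 : ℕ) ≤ Δ.sup Finset.card := by
    simpa using Finset.le_sup (f := Finset.card) hv
  refine (Finset.sup_lt_iff (by simp only [bot_eq_zero]; omega)).2 ?_
  intro F hF
  simp only [linkC, Finset.mem_filter] at hF
  obtain ⟨-, hvF, hins⟩ := hF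
  have h2 := Finset.le_sup (f := Finset.card) hins
  rw [Finset.card_insert_of_notMem hvF] at h2
  omega

/-- The impartial strong placement game of a simplicial complex: both players' moves are to
the links of the vertices of `Δ`. -/
def SPGame (Δ : Finset (Finset V)) : PGame :=
  ⟨{v : V // {v} ∈ Δ}, {v : V // {v} ∈ Δ},
    fun v => SPGame (linkC Δ v.1), fun v => SPGame (linkC Δ v.1)⟩
termination_by Δ.sup Finset.card
decreasing_by all_goals exact linkC_sup_lt Δ v.1 v.2

lemma spGame_le_ge (Δ : Finset (Finset V)) (hΔ : IsComplex Δ)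
    (h : ∀ F : Finset V, IsFacet Δ F → Even F.card) :
    SPGame Δ ≤ 0 ∧ 0 ≤ SPGame Δ := by
  constructor
  · rw [SPGame, PGame.mk_le_zero']
    intro i
    obtain ⟨w, hw⟩ := exists_response hΔ h i.2
    have ih := spGame_le_ge (linkC (linkC Δ i.1) w)
      (linkC_isComplex (linkC_isComplex hΔ _) _)
      (even_facets_double_link hΔ h)
    show (le_lf (SPGame (linkC Δ i.1)) 0).2
    rw [SPGame, PGame.mk_lf_zero']
    exact ⟨⟨w, hw⟩, ih.1⟩
  · rw [SPGame, PGame.zero_le_mk']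
    intro j
    obtain ⟨w, hw⟩ := exists_response hΔ h j.2
    have ih := spGame_le_ge (linkC (linkC Δ j.1) w)
      (linkC_isComplex (linkC_isComplex hΔ _) _)
      (even_facets_double_link hΔ h)
    show (le_lf 0 (SPGame (linkC Δ j.1))).2
    rw [SPGame, PGame.zero_lf_mk']
    exact ⟨⟨w, hw⟩, ih.2⟩
termination_by Δ.sup Finset.card
decreasing_by
  · exact lt_trans (linkC_sup_lt _ w hw) (linkC_sup_lt Δ i.1 i.2)
  · exact lt_trans (linkC_sup_lt _ w hw) (linkC_sup_lt Δ j.1 j.2)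

/-- If every facet of `Δ` has even cardinality, then the impartial strong placement game of
`Δ` is equivalent to `0`. -/
theorem spGame_equiv_zero_of_even_facets (Δ : Finset (Finset V)) (hΔ : IsComplex Δ)
    (h : ∀ F : Finset V, IsFacet Δ F → Even F.card) : SPGame Δ ≈ 0 :=
  spGame_le_ge Δ hΔ h
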